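/- Let X be a measurable space, A a finite nonempty set, κ a Markov kernel from X × A to X, r : X × A → [0,1] measurable, and H ∈ ℕ with H ≥ 1. Define V_{H+1}(x) := 0, Q_h(x,a) := r(x,a) + ∫ V_{h+1} dκ(x,a), and V_h(x) := max_{a ∈ A} Q_h(x,a) for h = H,…,1. On a probability space let X_1,…,X_{H+1} be X-valued and A_1,…,A_H be A-valued random variables, and let 𝓖_k be the σ-algebra generated by (X_1, A_1, …, X_k, A_k); assume that for each k ∈ {1,…,H} and every bounded measurable f : X → ℝ, E[ f(X_{k+1}) | 𝓖_k ] = ∫ f dκ(X_k, A_k) almost surely. Then for every h ∈ {1,…,H}, E[ Σ_{k=1}^H ( V_h(X_{k+1}) − ∫ V_h dκ(X_k, A_k) )² ] ≤ 10 H². -/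

import Mathlib

open MeasureTheory ProbabilityTheory

lemma auxInt {α : Type*} [MeasurableSpace α] (ν : Measure α) [IsFiniteMeasure ν]
    {f : α → ℝ} (hf : Measurable f) {C : ℝ} (h : ∀ x, |f x| ≤ C) : Integrable f ν :=
  ⟨hf.aestronglyMeasurable, HasFiniteIntegral.of_bounded (C := C)
    (ae_of_all _ fun x => by simpa [Real.norm_eq_abs] using h x)⟩

lemma auxIntLe {α : Type*} [MeasurableSpace α] (ν : Measure α) [IsProbabilityMeasure ν]
    {f : α → ℝ} {C : ℝ} (hf : Integrable f ν) (h : ∀ x, f x ≤ C) : ∫ x, f x ∂ν ≤ C := by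
  calc ∫ x, f x ∂ν ≤ ∫ _, C ∂ν := integral_mono hf (integrable_const C) h
  _ = C := by simp

lemma auxTele (c : ℕ → ℝ) (n : ℕ) :
    ∑ k ∈ Finset.Icc 1 n, (c (k+1) - c k) = c (n+1) - c 1 := by
  induction n with
  | zero => simp
  | succ n ih => rw [Finset.sum_Icc_succ_top (by omega), ih]; ring

/-- **Bound on the cumulative conditional variance of a fixed optimal value function.**
With optimal value functions `V_h` of a homogeneous finite-horizon MDP defined by the
Bellman optimality recursion, and a trajectory `X_1, A_1, …, X_H, A_H, X_{H+1}` generated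
by an arbitrary adapted policy, so that the conditional law of `X_{k+1}` given the past is
`κ(X_k, A_k)`, one has, for every `h ∈ {1,…,H}`,
`E[Σ_{k=1}^H (V_h(X_{k+1}) − ∫ V_h dκ(X_k, A_k))²] ≤ 10 H²`. -/
theorem optimal_value_variance_bound
    {X : Type*} [MeasurableSpace X] {A : Type*} [MeasurableSpace A] [Fintype A] [Nonempty A]
    (κ : Kernel (X × A) X) [IsMarkovKernel κ]
    (r : X × A → ℝ) (hr_meas : Measurable r)
    (hr0 : ∀ p, 0 ≤ r p) (hr1 : ∀ p, r p ≤ 1)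
    (H : ℕ) (hH : 1 ≤ H)
    (V : ℕ → X → ℝ) (Q : ℕ → X → A → ℝ)
    (hVtop : ∀ x, V (H + 1) x = 0)
    (hQ : ∀ h, 1 ≤ h → h ≤ H → ∀ x a,
      Q h x a = r (x, a) + ∫ x', V (h + 1) x' ∂(κ (x, a)))
    (hV : ∀ h, 1 ≤ h → h ≤ H → ∀ x, V h x = ⨆ a : A, Q h x a)
    {Ω : Type*} [mΩ : MeasurableSpace Ω] (μ : Measure Ω) [IsProbabilityMeasure μ]
    (Xs : ℕ → Ω → X) (As : ℕ → Ω → A)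
    (hXmeas : ∀ k, Measurable (Xs k)) (hAmeas : ∀ k, Measurable (As k))
    (G : ℕ → MeasurableSpace Ω)
    (hG : ∀ k, G k = ⨆ j ∈ Finset.Icc 1 k,
      (MeasurableSpace.comap (Xs j) inferInstance ⊔ MeasurableSpace.comap (As j) inferInstance))
    (hcond : ∀ k, 1 ≤ k → k ≤ H → ∀ f : X → ℝ, Measurable f → (∃ C, ∀ x, |f x| ≤ C) →
      μ[(fun ω => f (Xs (k + 1) ω)) | G k] =ᵐ[μ]
        fun ω => ∫ x', f x' ∂(κ (Xs k ω, As k ω))) :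
    ∀ h, 1 ≤ h → h ≤ H →
      ∫ ω, (∑ k ∈ Finset.Icc 1 H,
        (V h (Xs (k + 1) ω) - ∫ x', V h x' ∂(κ (Xs k ω, As k ω))) ^ 2) ∂μ ≤
        10 * (H : ℝ) ^ 2 := by
  intro h hh1 hhH
  classical
  -- Structural facts about the value functions, by downward induction.
  have basic : ∀ j h', 1 ≤ h' → h' + j = H + 1 →
      Measurable (V h') ∧ (∀ x, 0 ≤ V h' x) ∧ (∀ x, V h' x ≤ (H:ℝ) + 1 - h') := by
    intro j
    induction j with
    | zero =>
      intro h' h1 hj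
      have hE : h' = H + 1 := by omega
      subst hE
      refine ⟨?_, ?_, ?_⟩
      · have : V (H+1) = fun _ => (0:ℝ) := funext hVtop
        rw [this]; exact measurable_const
      · intro x; rw [hVtop]
      · intro x; rw [hVtop]; push_cast; linarith
    | succ j ih =>
      intro h' h1 hj
      have hh'H : h' ≤ H := by omega
      obtain ⟨mV, nnV, bV⟩ := ih (h'+1) (by omega) (by omega)
      have hcast : (h':ℝ) ≤ (H:ℝ) := by exact_mod_cast hh'H
      have habs : ∀ x, |V (h'+1) x| ≤ (H:ℝ) + 1 - ((h'+1 : ℕ) : ℝ) := fun x => by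
        have h1' := nnV x
        have h2' := bV x
        have : ((h'+1 : ℕ) : ℝ) = (h':ℝ) + 1 := by push_cast; ring
        rw [abs_le]; constructor <;> [linarith; linarith]
      have hJm : Measurable (fun p : X × A => ∫ x', V (h'+1) x' ∂(κ p)) :=
        (StronglyMeasurable.integral_kernel_prod_right'
          (mV.stronglyMeasurable.comp_measurable measurable_snd)).measurable
      have hJint : ∀ p : X × A, Integrable (V (h'+1)) (κ p) := fun p => auxInt _ mV habs
      have hJ0 : ∀ p : X × A, 0 ≤ ∫ x', V (h'+1) x' ∂(κ p) := fun p => integral_nonneg nnV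
      have hJle : ∀ p : X × A, ∫ x', V (h'+1) x' ∂(κ p) ≤ (H:ℝ) - h' := fun p => by
        have := auxIntLe (κ p) (hJint p) bV
        have hc : ((h'+1 : ℕ) : ℝ) = (h':ℝ) + 1 := by push_cast; ring
        linarith [hc ▸ this]
      have hQeq : ∀ x a, Q h' x a = r (x,a) + ∫ x', V (h'+1) x' ∂(κ (x,a)) := hQ h' h1 hh'H
      have hQm : ∀ a, Measurable fun x => Q h' x a := fun a => by
        have he : (fun x => Q h' x a) = fun x => r (x,a) + ∫ x', V (h'+1) x' ∂(κ (x,a)) :=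
          funext fun x => hQeq x a
        rw [he]
        exact (hr_meas.comp (measurable_id.prodMk measurable_const)).add
          (hJm.comp (measurable_id.prodMk measurable_const))
      have hQ0 : ∀ x a, 0 ≤ Q h' x a := fun x a => by
        rw [hQeq]; exact add_nonneg (hr0 _) (hJ0 _)
      have hQle : ∀ x a, Q h' x a ≤ (H:ℝ) + 1 - h' := fun x a => by
        rw [hQeq]
        have := hr1 (x,a); have := hJle (x,a); linarith
      refine ⟨?_, ?_, ?_⟩
      · have he : V h' = fun x => ⨆ a : A, Q h' x a := funext (hV h' h1 hh'H)
        rw [he]; exact Measurable.iSup fun a => hQm a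
      · intro x
        rw [hV h' h1 hh'H]
        obtain a := Classical.arbitrary A
        exact le_trans (hQ0 x a) (le_ciSup (Set.finite_range _).bddAbove a)
      · intro x
        rw [hV h' h1 hh'H]
        exact ciSup_le fun a => hQle x a
  have Bnd : ∀ h', 1 ≤ h' → h' ≤ H + 1 →
      Measurable (V h') ∧ (∀ x, 0 ≤ V h' x) ∧ (∀ x, V h' x ≤ (H:ℝ) + 1 - h') :=
    fun h' a b => basic (H + 1 - h') h' a (by omega)
  have habs : ∀ h', 1 ≤ h' → h' ≤ H + 1 → ∀ x, |V h' x| ≤ (H:ℝ) + 1 := by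
    intro h' a b x
    obtain ⟨_, nn, bd⟩ := Bnd h' a b
    have h0 : (0:ℝ) ≤ (h':ℝ) := Nat.cast_nonneg _
    rw [abs_le]; constructor
    · linarith [nn x, Nat.cast_nonneg (α := ℝ) H]
    · linarith [bd x]
  have hVint : ∀ h', 1 ≤ h' → h' ≤ H + 1 → ∀ p : X × A, Integrable (V h') (κ p) :=
    fun h' a b p => auxInt _ (Bnd h' a b).1 (habs h' a b)
  -- Monotonicity: `V h' ≤ V (h'+1) + 1` on `[1, H]`.
  have mono : ∀ j h', 1 ≤ h' → h' + j = H → ∀ x, V h' x ≤ V (h'+1) x + 1 := by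
    intro j
    induction j with
    | zero =>
      intro h' h1 hj
      have hE : h' = H := by omega
      subst h'
      intro x
      rw [hV H hH le_rfl]
      refine ciSup_le fun a => ?_
      rw [hQ H hH le_rfl]
      have hz : ∫ x', V (H+1) x' ∂(κ (x,a)) = 0 := by
        have : (fun x' => V (H+1) x') = fun _ => (0:ℝ) := funext hVtop
        rw [this, integral_zero]
      rw [hz, hVtop x]
      have := hr1 (x,a); linarith
    | succ j ih =>
      intro h' h1 hj x
      have hh'H : h' ≤ H := by omega
      have hnext : h' + 1 ≤ H := by omega
      rw [hV h' h1 hh'H]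
      refine ciSup_le fun a => ?_
      have hint1 : Integrable (V (h'+1)) (κ (x,a)) := hVint (h'+1) (by omega) (by omega) (x,a)
      have hint2 : Integrable (V (h'+1+1)) (κ (x,a)) := hVint (h'+2) (by omega) (by omega) (x,a)
      have step : Q h' x a ≤ Q (h'+1) x a + 1 := by
        rw [hQ h' h1 hh'H, hQ (h'+1) (by omega) hnext]
        have hmono1 : ∫ x', V (h'+1) x' ∂(κ (x,a)) ≤ ∫ x', (V (h'+1+1) x' + 1) ∂(κ (x,a)) :=
          integral_mono hint1 (hint2.add (integrable_const 1))
            (fun x' => ih (h'+1) (by omega) (by omega) x')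
        rw [integral_add hint2 (integrable_const 1)] at hmono1
        simp only [integral_const, measure_univ, ENNReal.toReal_one, probReal_univ, smul_eq_mul, one_mul,
          Pi.one_apply] at hmono1
        linarith
      have hle : Q (h'+1) x a ≤ V (h'+1) x := by
        rw [hV (h'+1) (by omega) hnext]
        exact le_ciSup (Set.finite_range _).bddAbove a
      linarith
  -- Facts about the fixed value function `V h`.
  obtain ⟨hfm, hf0, hfb⟩ := Bnd h hh1 (by omega)
  have hfH : ∀ x, V h x ≤ (H:ℝ) := by
    intro x
    have h1 : (1:ℝ) ≤ (h:ℝ) := by exact_mod_cast hh1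
    linarith [hfb x]
  have hfabs : ∀ x, |V h x| ≤ (H:ℝ) := fun x => abs_le.mpr ⟨by
      linarith [hf0 x, Nat.cast_nonneg (α := ℝ) H], hfH x⟩
  -- The kernel average of `V h`.
  have hgm : Measurable (fun p : X × A => ∫ x', V h x' ∂(κ p)) :=
    (StronglyMeasurable.integral_kernel_prod_right'
      (hfm.stronglyMeasurable.comp_measurable measurable_snd)).measurable
  have hg0 : ∀ p : X × A, 0 ≤ ∫ x', V h x' ∂(κ p) := fun p => integral_nonneg hf0
  have hgH : ∀ p : X × A, ∫ x', V h x' ∂(κ p) ≤ (H:ℝ) := fun p =>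
    auxIntLe (κ p) (hVint h hh1 (by omega) p) hfH
  -- The key inequality: the kernel average of `V h` exceeds `V h` by at most 1.
  have hkey : ∀ x a, ∫ x', V h x' ∂(κ (x,a)) ≤ V h x + 1 := by
    intro x a
    have hm := mono (H - h) h hh1 (by omega)
    have hint1 : Integrable (V h) (κ (x,a)) := hVint h hh1 (by omega) (x,a)
    have hint2 : Integrable (V (h+1)) (κ (x,a)) := hVint (h+1) (by omega) (by omega) (x,a)
    have h1 : ∫ x', V h x' ∂(κ (x,a)) ≤ ∫ x', (V (h+1) x' + 1) ∂(κ (x,a)) :=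
      integral_mono hint1 (hint2.add (integrable_const 1)) (fun x' => hm x')
    rw [integral_add hint2 (integrable_const 1)] at h1
    simp only [integral_const, measure_univ, ENNReal.toReal_one, probReal_univ, smul_eq_mul, one_mul,
      Pi.one_apply] at h1
    have h2 : ∫ x', V (h+1) x' ∂(κ (x,a)) = Q h x a - r (x,a) := by
      rw [hQ h hh1 hhH]; ring
    have h3 : Q h x a ≤ V h x := by
      rw [hV h hh1 hhH]
      exact le_ciSup (Set.finite_range _).bddAbove a
    have := hr0 (x,a)
    linarith
  -- Filtration facts
  have hGle : ∀ k, G k ≤ mΩ := by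
    intro k
    rw [hG k]
    refine iSup₂_le fun j _ => sup_le ?_ ?_
    · exact measurable_iff_comap_le.mp (hXmeas j)
    · exact measurable_iff_comap_le.mp (hAmeas j)
  have hXGk : ∀ k, 1 ≤ k → Measurable[G k] (Xs k) := by
    intro k hk
    rw [measurable_iff_comap_le, hG k]
    exact le_sup_left.trans (le_iSup₂ (f := fun j (_ : j ∈ Finset.Icc 1 k) =>
      MeasurableSpace.comap (Xs j) inferInstance ⊔ MeasurableSpace.comap (As j) inferInstance)
      k (Finset.mem_Icc.mpr ⟨hk, le_rfl⟩))
  have hAGk : ∀ k, 1 ≤ k → Measurable[G k] (As k) := by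
    intro k hk
    rw [measurable_iff_comap_le, hG k]
    exact le_sup_right.trans (le_iSup₂ (f := fun j (_ : j ∈ Finset.Icc 1 k) =>
      MeasurableSpace.comap (Xs j) inferInstance ⊔ MeasurableSpace.comap (As j) inferInstance)
      k (Finset.mem_Icc.mpr ⟨hk, le_rfl⟩))
  have hmGk : ∀ k, 1 ≤ k →
      Measurable[G k] fun ω => ∫ x', V h x' ∂(κ (Xs k ω, As k ω)) :=
    fun k hk => hgm.comp ((hXGk k hk).prodMk (hAGk k hk))
  -- Integrability facts over μ
  have hH0 : (0:ℝ) ≤ (H:ℝ) := Nat.cast_nonneg _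
  have hWmeas : ∀ k, Measurable fun ω => V h (Xs k ω) := fun k => hfm.comp (hXmeas k)
  have hMmeas : ∀ k, Measurable fun ω => ∫ x', V h x' ∂(κ (Xs k ω, As k ω)) :=
    fun k => hgm.comp ((hXmeas k).prodMk (hAmeas k))
  have hMabs : ∀ k ω, |∫ x', V h x' ∂(κ (Xs k ω, As k ω))| ≤ (H:ℝ) := fun k ω =>
    abs_le.mpr ⟨by linarith [hg0 (Xs k ω, As k ω)], hgH _⟩
  have hWint : ∀ k, Integrable (fun ω => V h (Xs k ω)) μ :=
    fun k => auxInt μ (hWmeas k) (fun ω => hfabs _)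
  have hMint : ∀ k, Integrable (fun ω => ∫ x', V h x' ∂(κ (Xs k ω, As k ω))) μ :=
    fun k => auxInt μ (hMmeas k) (hMabs k)
  have hsqabs : ∀ a : ℝ, |a| ≤ (H:ℝ) → |a^2| ≤ (H:ℝ)^2 := fun a ha => by
    rw [abs_pow]; exact pow_le_pow_left₀ (abs_nonneg _) ha 2
  have hW2int : ∀ k, Integrable (fun ω => (V h (Xs k ω))^2) μ :=
    fun k => auxInt μ ((hWmeas k).pow_const 2) (fun ω => hsqabs _ (hfabs _))
  have hM2int : ∀ k, Integrable (fun ω => (∫ x', V h x' ∂(κ (Xs k ω, As k ω)))^2) μ :=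
    fun k => auxInt μ ((hMmeas k).pow_const 2) (fun ω => hsqabs _ (hMabs k ω))
  have hprodint : ∀ k, Integrable
      (fun ω => (∫ x', V h x' ∂(κ (Xs k ω, As k ω))) * V h (Xs (k+1) ω)) μ := by
    intro k
    refine auxInt μ ((hMmeas k).mul (hWmeas (k+1))) (C := (H:ℝ) * (H:ℝ)) (fun ω => ?_)
    rw [abs_mul]
    exact mul_le_mul (hMabs k ω) (hfabs _) (abs_nonneg _) hH0
  have hDint : ∀ k, Integrable
      (fun ω => (V h (Xs (k+1) ω) - ∫ x', V h x' ∂(κ (Xs k ω, As k ω)))^2) μ := by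
    intro k
    refine auxInt μ (((hWmeas (k+1)).sub (hMmeas k)).pow_const 2)
      (C := ((H:ℝ) + (H:ℝ))^2) (fun ω => ?_)
    rw [abs_pow]
    refine pow_le_pow_left₀ (abs_nonneg _) ((abs_sub _ _).trans ?_) 2
    exact add_le_add (hfabs _) (hMabs k ω)
  -- Conditional expectation identities
  have hce : ∀ k, 1 ≤ k → k ≤ H →
      μ[(fun ω => V h (Xs (k+1) ω)) | G k] =ᵐ[μ]
        fun ω => ∫ x', V h x' ∂(κ (Xs k ω, As k ω)) :=
    fun k hk1 hkH => hcond k hk1 hkH (V h) hfm ⟨(H:ℝ), hfabs⟩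
  have E1 : ∀ k, 1 ≤ k → k ≤ H →
      ∫ ω, (∫ x', V h x' ∂(κ (Xs k ω, As k ω))) ∂μ = ∫ ω, V h (Xs (k+1) ω) ∂μ := by
    intro k hk1 hkH
    rw [← integral_condExp (hGle k) (f := fun ω => V h (Xs (k+1) ω))]
    exact (integral_congr_ae (hce k hk1 hkH)).symm
  have E2 : ∀ k, 1 ≤ k → k ≤ H →
      ∫ ω, (∫ x', V h x' ∂(κ (Xs k ω, As k ω))) * V h (Xs (k+1) ω) ∂μ
        = ∫ ω, (∫ x', V h x' ∂(κ (Xs k ω, As k ω)))^2 ∂μ := by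
    intro k hk1 hkH
    have hpull := condExp_stronglyMeasurable_mul_of_bound (hGle k)
      ((hmGk k hk1).stronglyMeasurable) (hWint (k+1)) (H:ℝ)
      (ae_of_all _ fun ω => by simpa [Real.norm_eq_abs] using hMabs k ω)
    calc ∫ ω, (∫ x', V h x' ∂(κ (Xs k ω, As k ω))) * V h (Xs (k+1) ω) ∂μ
        = ∫ ω, (μ[((fun ω => ∫ x', V h x' ∂(κ (Xs k ω, As k ω))) *
            (fun ω => V h (Xs (k+1) ω))) | G k]) ω ∂μ :=
          (integral_condExp (hGle k)).symm
      _ = ∫ ω, ((fun ω => ∫ x', V h x' ∂(κ (Xs k ω, As k ω))) *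
            (μ[(fun ω => V h (Xs (k+1) ω)) | G k])) ω ∂μ :=
          integral_congr_ae hpull
      _ = ∫ ω, (∫ x', V h x' ∂(κ (Xs k ω, As k ω)))^2 ∂μ := by
          refine integral_congr_ae ?_
          filter_upwards [hce k hk1 hkH] with ω hω
          simp only [Pi.mul_apply, hω]
          ring
  have E3 : ∀ k, 1 ≤ k → k ≤ H →
      ∫ ω, (V h (Xs (k+1) ω) - ∫ x', V h x' ∂(κ (Xs k ω, As k ω)))^2 ∂μ
        = (∫ ω, (V h (Xs (k+1) ω))^2 ∂μ)
          - ∫ ω, (∫ x', V h x' ∂(κ (Xs k ω, As k ω)))^2 ∂μ := by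
    intro k hk1 hkH
    have expand : (fun ω => (V h (Xs (k+1) ω) - ∫ x', V h x' ∂(κ (Xs k ω, As k ω)))^2)
        = fun ω => ((V h (Xs (k+1) ω))^2
            - 2 * ((∫ x', V h x' ∂(κ (Xs k ω, As k ω))) * V h (Xs (k+1) ω)))
            + (∫ x', V h x' ∂(κ (Xs k ω, As k ω)))^2 :=
      funext fun ω => by ring
    have i2 : Integrable
        (fun ω => 2 * ((∫ x', V h x' ∂(κ (Xs k ω, As k ω))) * V h (Xs (k+1) ω))) μ :=
      (hprodint k).const_mul 2
    have i1 : Integrable (fun ω => (V h (Xs (k+1) ω))^2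
        - 2 * ((∫ x', V h x' ∂(κ (Xs k ω, As k ω))) * V h (Xs (k+1) ω))) μ :=
      (hW2int (k+1)).sub i2
    rw [expand, integral_add i1 (hM2int k), integral_sub (hW2int (k+1)) i2,
      integral_const_mul _ _, E2 k hk1 hkH]
    ring
  -- Split the integral of the sum
  have hsplit : ∫ ω, (∑ k ∈ Finset.Icc 1 H,
        (V h (Xs (k + 1) ω) - ∫ x', V h x' ∂(κ (Xs k ω, As k ω))) ^ 2) ∂μ
      = ∑ k ∈ Finset.Icc 1 H, ∫ ω,
        (V h (Xs (k + 1) ω) - ∫ x', V h x' ∂(κ (Xs k ω, As k ω))) ^ 2 ∂μ :=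
    integral_finset_sum _ (fun k _ => hDint k)
  rw [hsplit]
  -- Telescoping sums
  have tele2 : ∑ k ∈ Finset.Icc 1 H,
      ((∫ ω, (V h (Xs (k+1) ω))^2 ∂μ) - ∫ ω, (V h (Xs k ω))^2 ∂μ)
      = (∫ ω, (V h (Xs (H+1) ω))^2 ∂μ) - ∫ ω, (V h (Xs 1 ω))^2 ∂μ :=
    auxTele (fun k => ∫ ω, (V h (Xs k ω))^2 ∂μ) H
  have tele1 : ∑ k ∈ Finset.Icc 1 H,
      ((∫ ω, V h (Xs (k+1) ω) ∂μ) - ∫ ω, V h (Xs k ω) ∂μ)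
      = (∫ ω, V h (Xs (H+1) ω) ∂μ) - ∫ ω, V h (Xs 1 ω) ∂μ :=
    auxTele (fun k => ∫ ω, V h (Xs k ω) ∂μ) H
  -- Per-term bound on the second sum
  have bnd2 : ∀ k, 1 ≤ k → k ≤ H →
      (∫ ω, (V h (Xs k ω))^2 ∂μ) - (∫ ω, (∫ x', V h x' ∂(κ (Xs k ω, As k ω)))^2 ∂μ)
        ≤ 2*(H:ℝ)*((∫ ω, V h (Xs k ω) ∂μ) - ∫ ω, (∫ x', V h x' ∂(κ (Xs k ω, As k ω))) ∂μ)
          + 2*(H:ℝ) := by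
    intro k hk1 hkH
    have hptwise : ∀ ω, (V h (Xs k ω))^2 - (∫ x', V h x' ∂(κ (Xs k ω, As k ω)))^2
        ≤ 2*(H:ℝ)*(V h (Xs k ω) - ∫ x', V h x' ∂(κ (Xs k ω, As k ω))) + 2*(H:ℝ) := by
      intro ω
      have h1 := hf0 (Xs k ω)
      have h2 := hfH (Xs k ω)
      have h3 := hg0 (Xs k ω, As k ω)
      have h4 := hgH (Xs k ω, As k ω)
      have h5 := hkey (Xs k ω) (As k ω)
      nlinarith [mul_nonneg (by linarith : (0:ℝ) ≤ V h (Xs k ω)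
          - (∫ x', V h x' ∂(κ (Xs k ω, As k ω))) + 1)
        (by linarith : (0:ℝ) ≤ 2*(H:ℝ) - V h (Xs k ω)
          - (∫ x', V h x' ∂(κ (Xs k ω, As k ω))))]
    have hIle : ∫ ω, ((V h (Xs k ω))^2 - (∫ x', V h x' ∂(κ (Xs k ω, As k ω)))^2) ∂μ
        ≤ ∫ ω, (2*(H:ℝ)*(V h (Xs k ω) - ∫ x', V h x' ∂(κ (Xs k ω, As k ω))) + 2*(H:ℝ)) ∂μ :=
      integral_mono ((hW2int k).sub (hM2int k))
        ((((hWint k).sub (hMint k)).const_mul _).add (integrable_const _)) hptwise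
    have iA : Integrable (fun ω =>
        2*(H:ℝ)*(V h (Xs k ω) - ∫ x', V h x' ∂(κ (Xs k ω, As k ω)))) μ :=
      ((hWint k).sub (hMint k)).const_mul _
    rw [integral_sub (hW2int k) (hM2int k), integral_add iA (integrable_const _),
      integral_const_mul _ _, integral_sub (hWint k) (hMint k), integral_const] at hIle
    simpa using hIle
  -- Assemble everything
  have hmain : ∑ k ∈ Finset.Icc 1 H, ∫ ω,
      (V h (Xs (k + 1) ω) - ∫ x', V h x' ∂(κ (Xs k ω, As k ω))) ^ 2 ∂μ
      = ∑ k ∈ Finset.Icc 1 H,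
        (((∫ ω, (V h (Xs (k+1) ω))^2 ∂μ) - ∫ ω, (V h (Xs k ω))^2 ∂μ)
          + ((∫ ω, (V h (Xs k ω))^2 ∂μ)
              - ∫ ω, (∫ x', V h x' ∂(κ (Xs k ω, As k ω)))^2 ∂μ)) := by
    refine Finset.sum_congr rfl fun k hk => ?_
    obtain ⟨hk1, hkH⟩ := Finset.mem_Icc.mp hk
    rw [E3 k hk1 hkH]; ring
  rw [hmain, Finset.sum_add_distrib, tele2]
  -- Bound the second part
  have hsum2 : ∑ k ∈ Finset.Icc 1 H,
      ((∫ ω, (V h (Xs k ω))^2 ∂μ) - ∫ ω, (∫ x', V h x' ∂(κ (Xs k ω, As k ω)))^2 ∂μ)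
      ≤ ∑ k ∈ Finset.Icc 1 H,
        (2*(H:ℝ)*((∫ ω, V h (Xs k ω) ∂μ) - ∫ ω, V h (Xs (k+1) ω) ∂μ) + 2*(H:ℝ)) := by
    refine Finset.sum_le_sum fun k hk => ?_
    obtain ⟨hk1, hkH⟩ := Finset.mem_Icc.mp hk
    have := bnd2 k hk1 hkH
    rw [E1 k hk1 hkH] at this
    exact this
  have hsum2' : ∑ k ∈ Finset.Icc 1 H,
      (2*(H:ℝ)*((∫ ω, V h (Xs k ω) ∂μ) - ∫ ω, V h (Xs (k+1) ω) ∂μ) + 2*(H:ℝ))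
      = 2*(H:ℝ)*((∫ ω, V h (Xs 1 ω) ∂μ) - ∫ ω, V h (Xs (H+1) ω) ∂μ) + (H:ℝ)*(2*(H:ℝ)) := by
    rw [Finset.sum_add_distrib, ← Finset.mul_sum, Finset.sum_const, Nat.card_Icc]
    have hcard : ((H + 1 - 1 : ℕ) : ℝ) = (H:ℝ) := by norm_num
    have hsum : ∑ k ∈ Finset.Icc 1 H,
        ((∫ ω, V h (Xs k ω) ∂μ) - ∫ ω, V h (Xs (k+1) ω) ∂μ)
        = (∫ ω, V h (Xs 1 ω) ∂μ) - ∫ ω, V h (Xs (H+1) ω) ∂μ := by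
      have : ∑ k ∈ Finset.Icc 1 H,
          ((∫ ω, V h (Xs k ω) ∂μ) - ∫ ω, V h (Xs (k+1) ω) ∂μ)
          = -∑ k ∈ Finset.Icc 1 H,
            ((∫ ω, V h (Xs (k+1) ω) ∂μ) - ∫ ω, V h (Xs k ω) ∂μ) := by
        rw [← Finset.sum_neg_distrib]
        exact Finset.sum_congr rfl fun k _ => by ring
      rw [this, tele1]; ring
    rw [hsum, nsmul_eq_mul, hcard]
  -- Final numeric bounds
  have hb1 : ∫ ω, (V h (Xs (H+1) ω))^2 ∂μ ≤ (H:ℝ)^2 :=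
    auxIntLe μ (hW2int (H+1)) (fun ω => by
      have := hfabs (Xs (H+1) ω)
      nlinarith [abs_nonneg (V h (Xs (H+1) ω)), neg_abs_le (V h (Xs (H+1) ω)),
        le_abs_self (V h (Xs (H+1) ω))])
  have hb2 : (0:ℝ) ≤ ∫ ω, (V h (Xs 1 ω))^2 ∂μ :=
    integral_nonneg fun ω => sq_nonneg _
  have hb3 : ∫ ω, V h (Xs 1 ω) ∂μ ≤ (H:ℝ) :=
    auxIntLe μ (hWint 1) (fun ω => hfH _)
  have hb4 : (0:ℝ) ≤ ∫ ω, V h (Xs (H+1) ω) ∂μ :=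
    integral_nonneg fun ω => hf0 _
  have hfinal := hsum2.trans (le_of_eq hsum2')
  have hprod : 2*(H:ℝ)*((∫ ω, V h (Xs 1 ω) ∂μ) - ∫ ω, V h (Xs (H+1) ω) ∂μ)
      ≤ 2*(H:ℝ)*(H:ℝ) := by
    have hle : (∫ ω, V h (Xs 1 ω) ∂μ) - ∫ ω, V h (Xs (H+1) ω) ∂μ ≤ (H:ℝ) := by linarith
    exact mul_le_mul_of_nonneg_left hle (by positivity)
  nlinarith [hfinal, hb1, hb2, hprod, sq_nonneg ((H:ℝ))]
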